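/- The pair (G, B₀) ∈ ℝ^{p×ñ} × ℝ^{p×m} belongs to Σ (i.e., Y = G X_d + B₀ U + B_w W for some W ∈ ℝ^{m_w×N} satisfying Φ₁₁ + Φ₁₂Wᵀ + WΦ₁₂ᵀ + WΦ₂₂Wᵀ ⪰ 0) if and only if col(I_p, Gᵀ, B₀ᵀ)ᵀ H col(I_p, Gᵀ, B₀ᵀ) ⪰ 0, where H := M Φ Mᵀ with M := [[B_w, Y],[0, −X_d],[0, −U]] ∈ ℝ^{(p+ñ+m)×(m_w+N)}. -/

import Mathlib

open Matrix

/-- The data matrix `M := [[B_w, Y],[0, −X_d],[0, −U]]`. -/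
noncomputable def dataMat {p m mw nt N : ℕ}
    (Y : Matrix (Fin p) (Fin N) ℝ) (Xd : Matrix (Fin nt) (Fin N) ℝ)
    (U : Matrix (Fin m) (Fin N) ℝ) (Bw : Matrix (Fin p) (Fin mw) ℝ) :
    Matrix (Fin p ⊕ (Fin nt ⊕ Fin m)) (Fin mw ⊕ Fin N) ℝ :=
  fromRows (fromCols Bw Y)
    (fromRows (fromCols (0 : Matrix (Fin nt) (Fin mw) ℝ) (-Xd))
      (fromCols (0 : Matrix (Fin m) (Fin mw) ℝ) (-U)))

/-- Addition of column-partitioned matrices. -/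
lemma fromColumns_add' {R : Type*} [AddCommMonoid R] {m n₁ n₂ : Type*}
    (A₁ B₁ : Matrix m n₁ R) (A₂ B₂ : Matrix m n₂ R) :
    fromCols A₁ A₂ + fromCols B₁ B₂ = fromCols (A₁ + B₁) (A₂ + B₂) := by
  ext i (j | j) <;> simp [fromCols]

/-- A square real matrix of full rank is a unit. -/
lemma isUnit_of_rank_eq_card {k : ℕ} (A : Matrix (Fin k) (Fin k) ℝ) (h : A.rank = k) :
    IsUnit A := by
  rw [← Matrix.mulVec_injective_iff_isUnit]
  have : Function.Injective A.mulVecLin := by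
    rw [← LinearMap.ker_eq_bot]
    have hrn := A.mulVecLin.finrank_range_add_finrank_ker
    rw [show Module.finrank ℝ (LinearMap.range A.mulVecLin) = A.rank from rfl] at hrn
    simp [h, Module.finrank_fin_fun] at hrn
    exact hrn
  simpa [Matrix.coe_mulVecLin] using this

/-- Expansion of the quadratic form of a block matrix against a column-partitioned matrix. -/
lemma quad_expand {p mw N : ℕ} (A : Matrix (Fin p) (Fin mw) ℝ) (B : Matrix (Fin p) (Fin N) ℝ)
    (P11 : Matrix (Fin mw) (Fin mw) ℝ) (P12 : Matrix (Fin mw) (Fin N) ℝ)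
    (P21 : Matrix (Fin N) (Fin mw) ℝ) (P22 : Matrix (Fin N) (Fin N) ℝ) :
    fromCols A B * fromBlocks P11 P12 P21 P22 * (fromCols A B)ᵀ
      = A * P11 * Aᵀ + A * P12 * Bᵀ + B * P21 * Aᵀ + B * P22 * Bᵀ := by
  rw [fromCols_mul_fromBlocks, transpose_fromCols, fromCols_mul_fromRows]
  simp only [Matrix.add_mul]
  abel_nf

/-- The product `col(I, Gᵀ, B₀ᵀ)ᵀ ⬝ M`. -/
lemma zm_eq {p m mw nt N : ℕ}
    (Y : Matrix (Fin p) (Fin N) ℝ) (Xd : Matrix (Fin nt) (Fin N) ℝ)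
    (U : Matrix (Fin m) (Fin N) ℝ) (Bw : Matrix (Fin p) (Fin mw) ℝ)
    (G : Matrix (Fin p) (Fin nt) ℝ) (B0 : Matrix (Fin p) (Fin m) ℝ) :
    (fromRows (1 : Matrix (Fin p) (Fin p) ℝ) (fromRows Gᵀ B0ᵀ))ᵀ * dataMat Y Xd U Bw
      = fromCols Bw (Y - G * Xd - B0 * U) := by
  rw [dataMat, transpose_fromRows, transpose_one, transpose_fromRows, transpose_transpose,
    transpose_transpose, fromCols_mul_fromRows, Matrix.one_mul, fromCols_mul_fromRows,
    mul_fromCols, mul_fromCols, fromColumns_add', fromColumns_add']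
  simp only [Matrix.mul_zero, Matrix.mul_neg, add_zero, zero_add]
  abel_nf

/-- The key congruence identity. -/
lemma key_identity {p m mw nt N : ℕ}
    (Y : Matrix (Fin p) (Fin N) ℝ) (Xd : Matrix (Fin nt) (Fin N) ℝ)
    (U : Matrix (Fin m) (Fin N) ℝ) (Bw : Matrix (Fin p) (Fin mw) ℝ)
    (Φb : Matrix (Fin mw ⊕ Fin N) (Fin mw ⊕ Fin N) ℝ)
    (G : Matrix (Fin p) (Fin nt) ℝ) (B0 : Matrix (Fin p) (Fin m) ℝ) :
    (fromRows (1 : Matrix (Fin p) (Fin p) ℝ) (fromRows Gᵀ B0ᵀ))ᵀ *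
        (dataMat Y Xd U Bw * Φb * (dataMat Y Xd U Bw)ᵀ) *
        fromRows (1 : Matrix (Fin p) (Fin p) ℝ) (fromRows Gᵀ B0ᵀ)
      = fromCols Bw (Y - G * Xd - B0 * U) * Φb *
          (fromCols Bw (Y - G * Xd - B0 * U))ᵀ := by
  set Z := fromRows (1 : Matrix (Fin p) (Fin p) ℝ) (fromRows Gᵀ B0ᵀ) with hZ
  set M := dataMat Y Xd U Bw with hM
  have h1 : Zᵀ * M = fromCols Bw (Y - G * Xd - B0 * U) := zm_eq Y Xd U Bw G B0
  have h2 : Mᵀ * Z = (fromCols Bw (Y - G * Xd - B0 * U))ᵀ := by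
    rw [← h1, transpose_mul, transpose_transpose]
  have assoc : Zᵀ * (M * Φb * Mᵀ) * Z = (Zᵀ * M) * Φb * (Mᵀ * Z) := by
    simp only [Matrix.mul_assoc]
  rw [assoc, h1, h2]

/-- Congruence by `Bw`. -/
lemma bw_congruence {p mw N : ℕ} (Bw : Matrix (Fin p) (Fin mw) ℝ)
    (W : Matrix (Fin mw) (Fin N) ℝ)
    (Φ11 : Matrix (Fin mw) (Fin mw) ℝ) (Φ12 : Matrix (Fin mw) (Fin N) ℝ)
    (Φ22 : Matrix (Fin N) (Fin N) ℝ) :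
    fromCols Bw (Bw * W) * fromBlocks Φ11 Φ12 Φ12ᵀ Φ22 * (fromCols Bw (Bw * W))ᵀ
      = Bw * (Φ11 + Φ12 * Wᵀ + W * Φ12ᵀ + W * Φ22 * Wᵀ) * Bwᵀ := by
  rw [quad_expand]
  simp only [transpose_mul, Matrix.mul_add, Matrix.add_mul, Matrix.mul_assoc]

/-- **Lemma 3 of the paper.** `(G, B₀)` belongs to the consistency set `Σ` (i.e.
`Y = G X_d + B₀ U + B_w W` for some disturbance `W` with
`Φ₁₁ + Φ₁₂Wᵀ + WΦ₁₂ᵀ + WΦ₂₂Wᵀ ⪰ 0`) iff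
`col(I_p, Gᵀ, B₀ᵀ)ᵀ H col(I_p, Gᵀ, B₀ᵀ) ⪰ 0`, where `H := M Φ Mᵀ` with
`M := [[B_w, Y],[0, −X_d],[0, −U]]`. -/
theorem consistency_set_iff_QMI (p m mw nt N : ℕ)
    (Y : Matrix (Fin p) (Fin N) ℝ) (Xd : Matrix (Fin nt) (Fin N) ℝ)
    (U : Matrix (Fin m) (Fin N) ℝ)
    (Bw : Matrix (Fin p) (Fin mw) ℝ) (hBw : Bw.rank = mw)
    (Φ11 : Matrix (Fin mw) (Fin mw) ℝ) (Φ12 : Matrix (Fin mw) (Fin N) ℝ)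
    (Φ22 : Matrix (Fin N) (Fin N) ℝ)
    (hΦ11 : Φ11.IsSymm) (hΦ22 : (-Φ22).PosDef)
    (G : Matrix (Fin p) (Fin nt) ℝ) (B0 : Matrix (Fin p) (Fin m) ℝ) :
    (∃ W : Matrix (Fin mw) (Fin N) ℝ,
        Y = G * Xd + B0 * U + Bw * W ∧
        (Φ11 + Φ12 * Wᵀ + W * Φ12ᵀ + W * Φ22 * Wᵀ).PosSemidef)
      ↔ ((fromRows (1 : Matrix (Fin p) (Fin p) ℝ) (fromRows Gᵀ B0ᵀ))ᵀ *
          (dataMat Y Xd U Bw * fromBlocks Φ11 Φ12 Φ12ᵀ Φ22 * (dataMat Y Xd U Bw)ᵀ) *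
          fromRows (1 : Matrix (Fin p) (Fin p) ℝ) (fromRows Gᵀ B0ᵀ)).PosSemidef := by
  have hΦ22symm : Φ22ᵀ = Φ22 := by
    have h := hΦ22.1
    rw [Matrix.IsHermitian, conjTranspose_eq_transpose_of_trivial, transpose_neg] at h
    exact neg_inj.mp h
  rw [key_identity]
  constructor
  · rintro ⟨W, hW, hpsd⟩
    have hE : Y - G * Xd - B0 * U = Bw * W := by rw [hW]; abel
    rw [hE, bw_congruence]
    have := hpsd.mul_mul_conjTranspose_same Bw
    rwa [conjTranspose_eq_transpose_of_trivial] at this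
  · intro hQ
    set E := Y - G * Xd - B0 * U with hEdef
    set Gm := Bwᵀ * Bw with hGm
    have hGmUnit : IsUnit Gm := by
      apply isUnit_of_rank_eq_card
      rw [hGm, Matrix.rank_transpose_mul_self, hBw]
    have hdet : IsUnit Gm.det := (Matrix.isUnit_iff_isUnit_det _).mp hGmUnit
    have hGmInv : Gm * Gm⁻¹ = 1 := Matrix.mul_nonsing_inv _ hdet
    -- Any vector in the kernel of `Bwᵀ` is in the kernel of `Eᵀ`.
    have hker : ∀ x : Fin p → ℝ, Bwᵀ *ᵥ x = 0 → Eᵀ *ᵥ x = 0 := by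
      intro x hx
      set v := Eᵀ *ᵥ x with hv
      have hKx : (fromCols Bw E)ᵀ *ᵥ x = Sum.elim (0 : Fin mw → ℝ) v := by
        rw [transpose_fromCols, fromRows_mulVec, hx]
      have hform : x ⬝ᵥ ((fromCols Bw E * fromBlocks Φ11 Φ12 Φ12ᵀ Φ22 *
          (fromCols Bw E)ᵀ) *ᵥ x) = v ⬝ᵥ (Φ22 *ᵥ v) := by
        have e1 : (fromCols Bw E * fromBlocks Φ11 Φ12 Φ12ᵀ Φ22 *
            (fromCols Bw E)ᵀ) *ᵥ x
            = fromCols Bw E *ᵥ (fromBlocks Φ11 Φ12 Φ12ᵀ Φ22 *ᵥ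
                ((fromCols Bw E)ᵀ *ᵥ x)) := by
          simp only [← Matrix.mulVec_mulVec]
        rw [e1, hKx, fromBlocks_mulVec]
        rw [Matrix.dotProduct_mulVec, ← Matrix.mulVec_transpose, hKx]
        rw [sumElim_dotProduct_sumElim]
        simp
      have h0 : 0 ≤ v ⬝ᵥ (Φ22 *ᵥ v) := by
        have := (posSemidef_iff_dotProduct_mulVec.mp hQ).2 x
        rwa [star_trivial, hform] at this
      by_contra hv0
      have hpos := (posDef_iff_dotProduct_mulVec.mp hΦ22).2 hv0
      rw [star_trivial, Matrix.neg_mulVec, dotProduct_neg] at hpos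
      linarith
    set W := Gm⁻¹ * (Bwᵀ * E) with hWdef
    have hD : ∀ c : Fin N → ℝ, (E - Bw * W) *ᵥ c = 0 := by
      intro c
      set d := (E - Bw * W) *ᵥ c with hd
      have hd' : d = E *ᵥ c - Bw *ᵥ (W *ᵥ c) := by
        rw [hd, Matrix.sub_mulVec, Matrix.mulVec_mulVec]
      have hWc : W *ᵥ c = Gm⁻¹ *ᵥ (Bwᵀ *ᵥ (E *ᵥ c)) := by
        rw [hWdef]
        simp only [← Matrix.mulVec_mulVec]
      have hBd : Bwᵀ *ᵥ d = 0 := by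
        rw [hd', Matrix.mulVec_sub, hWc]
        have : Bwᵀ *ᵥ (Bw *ᵥ (Gm⁻¹ *ᵥ (Bwᵀ *ᵥ (E *ᵥ c))))
            = (Gm * Gm⁻¹) *ᵥ (Bwᵀ *ᵥ (E *ᵥ c)) := by
          simp only [hGm, ← Matrix.mulVec_mulVec]
        rw [this, hGmInv, Matrix.one_mulVec, sub_self]
      have hEd : Eᵀ *ᵥ d = 0 := hker d hBd
      have hdd : d ⬝ᵥ d = 0 := by
        have h1 : d ⬝ᵥ (E *ᵥ c) = 0 := by
          rw [Matrix.dotProduct_mulVec, ← Matrix.mulVec_transpose, hEd, zero_dotProduct]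
        have h2 : d ⬝ᵥ (Bw *ᵥ (W *ᵥ c)) = 0 := by
          rw [Matrix.dotProduct_mulVec, ← Matrix.mulVec_transpose, hBd, zero_dotProduct]
        nth_rewrite 2 [hd']
        rw [dotProduct_sub, h1, h2, sub_self]
      exact dotProduct_self_eq_zero.mp hdd
    have hEW : E = Bw * W := by
      have hz : E - Bw * W = 0 := by
        ext i j
        have := congrFun (hD (Pi.single j 1)) i
        rw [Matrix.mulVec_single] at this
        simpa using this
      rw [sub_eq_zero] at hz
      exact hz
    rw [hEW, bw_congruence] at hQ
    refine ⟨W, ?_, ?_⟩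
    · have : Y = G * Xd + B0 * U + (Y - G * Xd - B0 * U) := by abel
      rw [this, ← hEdef, hEW]
    · rw [posSemidef_iff_dotProduct_mulVec]; constructor
      · rw [Matrix.IsHermitian, conjTranspose_eq_transpose_of_trivial]
        simp only [transpose_add, transpose_mul, transpose_transpose, hΦ11.eq, hΦ22symm,
          Matrix.mul_assoc]
        abel
      · intro y
        set x := Bw *ᵥ (Gm⁻¹ *ᵥ y) with hx
        have hBx : Bwᵀ *ᵥ x = y := by
          rw [hx]
          have : Bwᵀ *ᵥ (Bw *ᵥ (Gm⁻¹ *ᵥ y)) = (Gm * Gm⁻¹) *ᵥ y := by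
            simp only [hGm, ← Matrix.mulVec_mulVec]
          rw [this, hGmInv, Matrix.one_mulVec]
        have hform : x ⬝ᵥ ((Bw * (Φ11 + Φ12 * Wᵀ + W * Φ12ᵀ + W * Φ22 * Wᵀ) * Bwᵀ) *ᵥ x)
            = y ⬝ᵥ ((Φ11 + Φ12 * Wᵀ + W * Φ12ᵀ + W * Φ22 * Wᵀ) *ᵥ y) := by
          have e1 : (Bw * (Φ11 + Φ12 * Wᵀ + W * Φ12ᵀ + W * Φ22 * Wᵀ) * Bwᵀ) *ᵥ x
              = Bw *ᵥ ((Φ11 + Φ12 * Wᵀ + W * Φ12ᵀ + W * Φ22 * Wᵀ) *ᵥ (Bwᵀ *ᵥ x)) := by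
            simp only [← Matrix.mulVec_mulVec]
          rw [e1, hBx, Matrix.dotProduct_mulVec, ← Matrix.mulVec_transpose, hBx]
        have := (posSemidef_iff_dotProduct_mulVec.mp hQ).2 x
        rwa [star_trivial, hform, ← star_trivial y] at this
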